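/- Trading certificate for non-weightedness: let (v,N) be a simple game, S_1,…,S_p winning coalitions, L_1,…,L_q losing coalitions, and x∈ℝ_{≥0}^p, y∈ℝ_{≥0}^q with Σx_i = Σy_j > 0 such that for every agent a∈N, Σ_{i: a∈S_i} x_i ≤ Σ_{j: a∈L_j} y_j. Then (v,N) is not weighted. -/
import Mathlib


def SimpleGame (n : ℕ) (W : Finset (Fin n) → Prop) : Prop :=
  ¬ W ∅ ∧ W Finset.univ ∧ ∀ ⦃S T : Finset (Fin n)⦄, S ⊆ T → W S → W T

def IsWeighted {n : ℕ} (W : Finset (Fin n) → Prop) : Prop :=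
  ∃ q : ℝ, 0 < q ∧ ∃ w : Fin n → ℝ, (∀ i, 0 ≤ w i) ∧
    ∀ S : Finset (Fin n), W S ↔ q ≤ ∑ i ∈ S, w i

private lemma swap_sum {n m : ℕ} (F : Fin m → Finset (Fin n)) (c : Fin m → ℝ)
    (w : Fin n → ℝ) :
    ∑ i, c i * ∑ a ∈ F i, w a =
      ∑ a : Fin n, w a * ∑ i ∈ Finset.univ.filter (fun i => a ∈ F i), c i := by
  have h1 : ∀ i, c i * ∑ a ∈ F i, w a
      = ∑ a : Fin n, if a ∈ F i then c i * w a else 0 := by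
    intro i
    rw [Finset.sum_ite_mem, Finset.univ_inter, Finset.mul_sum]
  have h2 : ∀ a : Fin n, w a * ∑ i ∈ Finset.univ.filter (fun i => a ∈ F i), c i
      = ∑ i : Fin m, if a ∈ F i then c i * w a else 0 := by
    intro a
    rw [Finset.mul_sum, Finset.sum_filter]
    congr 1; ext i
    by_cases h : a ∈ F i <;> simp [h, mul_comm]
  simp_rw [h1, h2]
  exact Finset.sum_comm

/-- Trading certificate for non-weightedness. -/
theorem trading_certificate_not_weighted {n p q : ℕ} (W : Finset (Fin n) → Prop)
    (hsg : SimpleGame n W)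
    (Sfam : Fin p → Finset (Fin n)) (Lfam : Fin q → Finset (Fin n))
    (hS : ∀ i, W (Sfam i)) (hL : ∀ j, ¬ W (Lfam j))
    (x : Fin p → ℝ) (y : Fin q → ℝ)
    (hx : ∀ i, 0 ≤ x i) (hy : ∀ j, 0 ≤ y j)
    (hsum : ∑ i, x i = ∑ j, y j) (hpos : 0 < ∑ i, x i)
    (hcover : ∀ a : Fin n,
      ∑ i ∈ Finset.univ.filter (fun i => a ∈ Sfam i), x i ≤
        ∑ j ∈ Finset.univ.filter (fun j => a ∈ Lfam j), y j) :
    ¬ IsWeighted W := by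
  rintro ⟨Q, hQ, w, hw, hiff⟩
  -- winning side: each w(Sfam i) ≥ Q
  have hA : Q * ∑ i, x i ≤ ∑ i, x i * ∑ a ∈ Sfam i, w a := by
    rw [Finset.mul_sum]
    refine Finset.sum_le_sum fun i _ => ?_
    rw [mul_comm]
    exact mul_le_mul_of_nonneg_left ((hiff (Sfam i)).1 (hS i)) (hx i)
  -- losing side: each w(Lfam j) < Q
  have hLlt : ∀ j, ∑ a ∈ Lfam j, w a < Q := fun j =>
    lt_of_not_ge fun h => hL j ((hiff (Lfam j)).2 h)
  have hypos : 0 < ∑ j, y j := hsum ▸ hpos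
  obtain ⟨j0, -, hj0⟩ := Finset.exists_lt_of_sum_lt (f := fun _ => (0:ℝ))
    (by simpa using hypos)
  have hB : ∑ j, y j * ∑ a ∈ Lfam j, w a < Q * ∑ j, y j := by
    rw [Finset.mul_sum]
    refine Finset.sum_lt_sum (fun j _ => ?_) ⟨j0, Finset.mem_univ j0, ?_⟩
    · rw [mul_comm Q]
      exact mul_le_mul_of_nonneg_left (hLlt j).le (hy j)
    · rw [mul_comm Q]
      exact mul_lt_mul_of_pos_left (hLlt j0) hj0
  have hmid : ∑ i, x i * ∑ a ∈ Sfam i, w a ≤ ∑ j, y j * ∑ a ∈ Lfam j, w a := by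
    rw [swap_sum Sfam x w, swap_sum Lfam y w]
    exact Finset.sum_le_sum fun a _ => mul_le_mul_of_nonneg_left (hcover a) (hw a)
  have := (hA.trans hmid).trans_lt hB
  rw [← hsum] at this
  exact lt_irrefl _ this
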